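/- Let h(β) = (1+β²)^{1/4}. Then for every j, k ∈ ℕ there exist constants C, β₀ > 0 such that for all β ≥ β₀ and σ ∈ ℝ: |h(σ+β)^j (σ+β)^k − h(β)^j β^k| ≤ C h(β)^j β^k (h(β)^{-1} + β^{-1}) (1+σ²)^{(j+k+2)/2}. -/

import Mathlib

lemma aux_pow (n : ℕ) (x y M : ℝ) (hM : 1 ≤ M) (hx : |x| ≤ M) (hy : |y| ≤ M) :
    |x ^ n - y ^ n| * M ≤ n * M ^ n * |x - y| := by
  induction n with
  | zero => simp
  | succ n ih =>
    have hM0 : (0:ℝ) ≤ M := by linarith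
    have h1 : |x ^ (n+1) - y ^ (n+1)| ≤ |x| ^ n * |x - y| + |y| * |x ^ n - y ^ n| := by
      have key : x ^ (n+1) - y ^ (n+1) = x ^ n * (x - y) + y * (x ^ n - y ^ n) := by ring
      rw [key]
      refine (abs_add_le _ _).trans ?_
      rw [abs_mul, abs_mul, abs_pow]
    calc |x ^ (n+1) - y ^ (n+1)| * M
        ≤ (|x| ^ n * |x - y| + |y| * |x ^ n - y ^ n|) * M :=
          mul_le_mul_of_nonneg_right h1 hM0
      _ = |x| ^ n * |x - y| * M + |y| * (|x ^ n - y ^ n| * M) := by ring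
      _ ≤ M ^ n * |x - y| * M + M * (n * M ^ n * |x - y|) := by gcongr
      _ = (n * (M ^ n * M) + M ^ n * M) * |x - y| := by ring
      _ = (n + 1 : ℕ) * M ^ (n + 1) * |x - y| := by push_cast; ring

set_option maxHeartbeats 1000000 in
/-- for `h(β) = (1+β²)^{1/4}` and `j, k : ℕ`, for large `β` one has
`|h(σ+β)^j(σ+β)^k − h(β)^jβ^k| ≤ C h(β)^j β^k (h(β)⁻¹ + β⁻¹)(1+σ²)^{(j+k+2)/2}`. -/
theorem h_perturbation_estimate (j k : ℕ) :
    ∃ C > 0, ∃ β₀ > 0, ∀ β ≥ β₀, ∀ σ : ℝ,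
      |((1 + (σ + β) ^ 2) ^ ((1 : ℝ) / 4)) ^ j * (σ + β) ^ k
          - ((1 + β ^ 2) ^ ((1 : ℝ) / 4)) ^ j * β ^ k|
        ≤ C * ((1 + β ^ 2) ^ ((1 : ℝ) / 4)) ^ j * β ^ k
            * (((1 + β ^ 2) ^ ((1 : ℝ) / 4))⁻¹ + β⁻¹)
            * (1 + σ ^ 2) ^ (((j : ℝ) + (k : ℝ) + 2) / 2) := by
  refine ⟨4 ^ (j + k + 4), by positivity, 1, one_pos, fun b hb s => ?_⟩
  have hb1 : (1:ℝ) ≤ b := hb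
  have hb0 : (0:ℝ) < b := by linarith
  set v : ℝ := (1 + b ^ 2) ^ ((1:ℝ)/4) with hvdef
  set u : ℝ := (1 + (s + b) ^ 2) ^ ((1:ℝ)/4) with hudef
  set w : ℝ := (1 + s ^ 2) ^ ((1:ℝ)/2) with hwdef
  have hv1 : 1 ≤ v := Real.one_le_rpow (by nlinarith) (by norm_num)
  have hu1 : 1 ≤ u := Real.one_le_rpow (by nlinarith [sq_nonneg (s+b)]) (by norm_num)
  have hw1 : 1 ≤ w := Real.one_le_rpow (by nlinarith) (by norm_num)
  have hv0 : (0:ℝ) < v := by linarith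
  have hu0 : (0:ℝ) < u := by linarith
  have hw0 : (0:ℝ) < w := by linarith
  have hv4 : v ^ 4 = 1 + b ^ 2 := by
    rw [hvdef, ← Real.rpow_natCast ((1 + b ^ 2) ^ ((1:ℝ)/4)) 4,
      ← Real.rpow_mul (by positivity)]
    norm_num
  have hu4 : u ^ 4 = 1 + (s + b) ^ 2 := by
    rw [hudef, ← Real.rpow_natCast ((1 + (s + b) ^ 2) ^ ((1:ℝ)/4)) 4,
      ← Real.rpow_mul (by positivity)]
    norm_num
  have hw2 : w ^ 2 = 1 + s ^ 2 := by
    rw [hwdef, ← Real.rpow_natCast ((1 + s ^ 2) ^ ((1:ℝ)/2)) 2,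
      ← Real.rpow_mul (by positivity)]
    norm_num
  have hE : (1 + s ^ 2) ^ (((j : ℝ) + (k : ℝ) + 2) / 2) = w ^ (j + k + 2) := by
    rw [hwdef, ← Real.rpow_natCast ((1 + s ^ 2) ^ ((1:ℝ)/2)) (j + k + 2),
      ← Real.rpow_mul (by positivity)]
    congr 1
    push_cast
    ring
  have hsw : |s| ≤ w := by nlinarith [abs_nonneg s, sq_abs s, hw2, hw0]
  have hbv : b ≤ v ^ 2 := by nlinarith [hv4, hv0, hb0, sq_nonneg v]
  have hwn : w ≤ w ^ (j + k + 2) := le_self_pow₀ hw1 (by omega)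
  have hwn2 : w ^ (j + k + 1) ≤ w ^ (j + k + 2) := pow_le_pow_right₀ hw1 (by omega)
  have hswn : |s| ≤ w ^ (j + k + 2) := hsw.trans hwn
  have hvj1 : (1:ℝ) ≤ v ^ j := by
    simpa using pow_le_pow_left₀ (by norm_num : (0:ℝ) ≤ 1) hv1 j
  have hbk1 : (1:ℝ) ≤ b ^ k := by
    simpa using pow_le_pow_left₀ (by norm_num : (0:ℝ) ≤ 1) hb1 k
  rw [hE]
  have hrw : (4:ℝ) ^ (j + k + 4) * v ^ j * b ^ k * (v⁻¹ + b⁻¹) * w ^ (j + k + 2)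
      = 4 ^ (j + k + 4) * v ^ j * b ^ k * (v + b) * w ^ (j + k + 2) / (v * b) := by
    field_simp
    ring
  rw [hrw, le_div_iff₀ (by positivity)]
  clear_value v u w
  clear hvdef hudef hwdef hE hrw
  rcases le_or_gt |s| (b / 2) with hc | hc
  · -- Case |s| ≤ b/2
    have hs1 : -(b/2) ≤ s := (abs_le.mp hc).1
    have hs2 : s ≤ b/2 := (abs_le.mp hc).2
    have hsb0 : 0 < s + b := by linarith
    have hsbb : s + b ≤ 2 * b := by linarith
    have hsbk : (s + b) ^ k ≤ (2*b) ^ k := pow_le_pow_left₀ hsb0.le hsbb k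
    have hu2v : u ≤ 2 * v := by
      refine le_of_pow_le_pow_left₀ (n := 4) (by norm_num) (by positivity) ?_
      have h1 : (s + b)^2 ≤ (2*b)^2 := pow_le_pow_left₀ hsb0.le hsbb 2
      have h2 : (0:ℝ) ≤ b^2 := sq_nonneg b
      calc u ^ 4 = 1 + (s+b)^2 := hu4
        _ ≤ 1 + (2*b)^2 := by linarith
        _ ≤ 16 * (1 + b^2) := by nlinarith [h2]
        _ = (2*v)^4 := by rw [mul_pow, hv4]; norm_num
    have hd : |u^4 - v^4| = |s| * |s + 2*b| := by
      rw [hu4, hv4, show 1 + (s+b)^2 - (1+b^2) = s * (s + 2*b) by ring, abs_mul]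
    have h2b : |s + 2*b| ≤ 3 * b := abs_le.mpr ⟨by linarith, by linarith⟩
    have hlow : |u - v| * v ^ 3 ≤ |u ^ 4 - v ^ 4| := by
      rcases le_total u v with h | h
      · rw [abs_of_nonpos (by linarith : u - v ≤ 0),
          abs_of_nonpos (by linarith [pow_le_pow_left₀ hu0.le h 4] : u ^ 4 - v ^ 4 ≤ 0)]
        linarith [mul_nonneg (mul_nonneg hu0.le (sub_nonneg.mpr h))
          (by positivity : (0:ℝ) ≤ v^2 + u*v + u^2)]
      · rw [abs_of_nonneg (by linarith : (0:ℝ) ≤ u - v),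
          abs_of_nonneg (by linarith [pow_le_pow_left₀ hv0.le h 4] : (0:ℝ) ≤ u ^ 4 - v ^ 4)]
        linarith [mul_nonneg (mul_nonneg hu0.le (sub_nonneg.mpr h))
          (by positivity : (0:ℝ) ≤ u^2 + u*v + v^2)]
    have huvv : |u - v| * v ≤ 3 * |s| := by
      have h5 : |u - v| * v * v^2 ≤ (3 * |s|) * v^2 := by
        have e : |u - v| * v * v^2 = |u-v| * v^3 := by ring
        rw [e]
        calc |u-v| *v^3 ≤ |u^4 - v^4| := hlow
          _ = |s| * |s+2*b| := hd
          _ ≤ |s| * (3*b) := mul_le_mul_of_nonneg_left h2b (abs_nonneg s)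
          _ ≤ 3* |s| * v^2 := by linarith [mul_nonneg (abs_nonneg s) (sub_nonneg.mpr hbv)]
      exact le_of_mul_le_mul_right h5 (by positivity)
    have T1b : |u^j - v^j| ≤ j * (2*v)^j * |u - v| := by
      have ha := aux_pow j u v (2*v) (by linarith) (by rw [abs_of_pos hu0]; linarith)
        (by rw [abs_of_pos hv0]; linarith)
      calc |u^j - v^j| ≤ |u^j - v^j| * (2*v) :=
            le_mul_of_one_le_right (abs_nonneg _) (by linarith)
        _ ≤ _ := ha
    have T2b : |(s+b)^k - b^k| * (2*b) ≤ k * (2*b)^k * |s| := by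
      have ha := aux_pow k (s+b) b (2*b) (by linarith) (by rw [abs_of_pos hsb0]; linarith)
        (by rw [abs_of_pos hb0]; linarith)
      simpa using ha
    have hdecomp : |u^j * (s+b)^k - v^j * b^k|
        ≤ |u^j - v^j| * (s+b)^k + v^j * |(s+b)^k - b^k| := by
      have key : u^j*(s+b)^k - v^j*b^k = (u^j - v^j)*(s+b)^k + v^j*((s+b)^k - b^k) := by ring
      rw [key]
      refine (abs_add_le _ _).trans ?_
      rw [abs_mul, abs_mul, abs_of_nonneg (by positivity : (0:ℝ) ≤ (s+b)^k),
        abs_of_nonneg (by positivity : (0:ℝ) ≤ v^j)]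
    have hG1 : |u^j - v^j| * (s+b)^k * (v*b)
        ≤ (3*j*2^(j+k)) * (v^j*b^k*(v+b)*w^(j+k+2)) := by
      calc |u^j - v^j| * (s+b)^k * (v*b)
          ≤ (j*(2*v)^j* |u-v|) * ((2*b)^k) * (v*b) := by
            apply mul_le_mul_of_nonneg_right _ (by positivity)
            exact mul_le_mul T1b hsbk (by positivity) (by positivity)
        _ = (j*2^(j+k)) * (v^j * b^k * ((|u-v| * v) * b)) := by ring
        _ ≤ (j*2^(j+k)) * (v^j * b^k * ((3* |s|) * b)) := by gcongr
        _ ≤ (j*2^(j+k)) * (v^j * b^k * ((3*(w^(j+k+2))) * (v+b))) := by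
            gcongr <;> first | exact hswn | linarith
        _ = (3*j*2^(j+k)) * (v^j*b^k*(v+b)*w^(j+k+2)) := by ring
    have hG2 : v^j * |(s+b)^k - b^k| * (v*b)
        ≤ (k*2^k) * (v^j*b^k*(v+b)*w^(j+k+2)) := by
      calc v^j * |(s+b)^k - b^k| * (v*b)
          ≤ v^j * |(s+b)^k - b^k| * (v*b) * 2 :=
            le_mul_of_one_le_right (by positivity) one_le_two
        _ = v^j * ((|(s+b)^k - b^k|) * (2*b)) * v := by ring
        _ ≤ v^j * (k * (2*b)^k * |s|) * v := by
            apply mul_le_mul_of_nonneg_right _ hv0.le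
            exact mul_le_mul_of_nonneg_left T2b (by positivity)
        _ = (k*2^k) * (v^j * b^k * (|s| * v)) := by ring
        _ ≤ (k*2^k) * (v^j * b^k * (w^(j+k+2) * (v+b))) := by
            gcongr <;> first | exact hswn | linarith
        _ = (k*2^k) * (v^j*b^k*(v+b)*w^(j+k+2)) := by ring
    have hjR : (j:ℝ) ≤ 2^(j+k) := by
      have h : j ≤ 2^(j+k) :=
        le_trans (Nat.lt_two_pow_self (n := j)).le (Nat.pow_le_pow_right (by norm_num) (Nat.le_add_right j k))
      exact_mod_cast h
    have hkR : (k:ℝ) ≤ 2^(j+k) := by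
      have h : k ≤ 2^(j+k) :=
        le_trans (Nat.lt_two_pow_self (n := k)).le (Nat.pow_le_pow_right (by norm_num) (Nat.le_add_left k j))
      exact_mod_cast h
    have h2k : (2:ℝ)^k ≤ 2^(j+k) := pow_le_pow_right₀ (by norm_num) (Nat.le_add_left k j)
    have h44 : (4:ℝ)^(j+k+4) = 256 * (2^(j+k) * 2^(j+k)) := by
      rw [pow_add, show (4:ℝ) = 2*2 by norm_num, mul_pow]
      norm_num
      ring
    have hC : 3*(j:ℝ)*2^(j+k) + (k:ℝ)*2^k ≤ 4^(j+k+4) := by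
      rw [h44]
      have hp : (0:ℝ) ≤ 2^(j+k) := by positivity
      linarith [mul_nonneg (sub_nonneg.mpr hjR) hp,
        mul_le_mul hkR h2k (by positivity) hp,
        mul_nonneg (Nat.cast_nonneg k : (0:ℝ) ≤ k) (by positivity : (0:ℝ) ≤ (2:ℝ)^k)]
    calc |u^j*(s+b)^k - v^j*b^k| * (v*b)
        ≤ (|u^j - v^j| * (s+b)^k + v^j * |(s+b)^k - b^k|) * (v*b) :=
          mul_le_mul_of_nonneg_right hdecomp (by positivity)
      _ = |u^j - v^j| * (s+b)^k * (v*b) + v^j * |(s+b)^k - b^k| * (v*b) := by ring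
      _ ≤ (3*j*2^(j+k)) * (v^j*b^k*(v+b)*w^(j+k+2))
            + (k*2^k) * (v^j*b^k*(v+b)*w^(j+k+2)) := add_le_add hG1 hG2
      _ = (3*(j:ℝ)*2^(j+k) + (k:ℝ)*2^k) * (v^j*b^k*(v+b)*w^(j+k+2)) := by ring
      _ ≤ 4^(j+k+4) * (v^j*b^k*(v+b)*w^(j+k+2)) :=
          mul_le_mul_of_nonneg_right hC (by positivity)
      _ = 4^(j+k+4)*v^j*b^k*(v+b)*w^(j+k+2) := by ring
  · -- Case b/2 < |s|
    have hbw : b ≤ 2*w := by linarith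
    have hsb3 : |s + b| ≤ 3*w := by
      calc |s+b| ≤ |s| + |b| := abs_add_le s b
        _ = |s| + b := by rw [abs_of_pos hb0]
        _ ≤ w + 2*w := by linarith
        _ = 3*w := by ring
    have hu4w : u^2 ≤ 4*w := by
      refine le_of_pow_le_pow_left₀ (n := 2) (by norm_num) (by positivity) ?_
      have h1 : (s+b)^2 ≤ 9*w^2 := by
        have := pow_le_pow_left₀ (abs_nonneg (s+b)) hsb3 2
        rw [sq_abs] at this
        nlinarith [sq_nonneg w]
      have h2 : (1:ℝ) ≤ w^2 := by rw [hw2]; nlinarith [sq_nonneg s]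
      calc (u^2)^2 = u^4 := by ring
        _ = 1 + (s+b)^2 := hu4
        _ ≤ w^2 + 9*w^2 := by linarith
        _ ≤ (4*w)^2 := by nlinarith [sq_nonneg w, hw0.le]
    have huj : u^j ≤ (4*w)^j := by
      refine pow_le_pow_left₀ hu0.le ?_ j
      calc u ≤ u^2 := by nlinarith [mul_nonneg hu0.le (sub_nonneg.mpr hu1)]
        _ ≤ 4*w := hu4w
    have hsbk2 : |s+b|^k ≤ (4*w)^k := pow_le_pow_left₀ (abs_nonneg _) (by linarith) k
    have hAabs : |u^j * (s+b)^k - v^j*b^k| ≤ u^j * |s+b|^k + v^j * b^k := by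
      refine (abs_sub _ _).trans ?_
      simp only [abs_mul, abs_pow, abs_of_pos hu0, abs_of_pos hv0, abs_of_pos hb0]
      exact le_rfl
    have hP1 : u^j * |s+b|^k * (v*b) ≤ (2*4^(j+k)) * (v^j*b^k*(v+b)*w^(j+k+2)) := by
      calc u^j * |s+b|^k * (v*b)
          ≤ (4*w)^j * (4*w)^k * (v*(2*w)) := by
            apply mul_le_mul (mul_le_mul huj hsbk2 (by positivity) (by positivity))
              _ (by positivity) (by positivity)
            exact mul_le_mul_of_nonneg_left hbw hv0.le
        _ = (2*4^(j+k)) * (1 * 1 * v * w^(j+k+1)) := by ring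
        _ ≤ (2*4^(j+k)) * (v^j * b^k * (v+b) * w^(j+k+2)) := by
            gcongr <;> first | exact hvj1 | exact hbk1 | exact hwn2 | linarith
        _ = (2*4^(j+k)) * (v^j*b^k*(v+b)*w^(j+k+2)) := by ring
    have hP2 : v^j*b^k*(v*b) ≤ 2 * (v^j*b^k*(v+b)*w^(j+k+2)) := by
      calc v^j*b^k*(v*b) ≤ v^j*b^k*(v*(2*w)) := by
            apply mul_le_mul_of_nonneg_left _ (by positivity)
            exact mul_le_mul_of_nonneg_left hbw hv0.le
        _ = 2*(v^j*b^k*(v*w)) := by ring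
        _ ≤ 2*(v^j*b^k*((v+b)*w^(j+k+2))) := by
            gcongr <;> first | exact hwn | linarith
        _ = 2*(v^j*b^k*(v+b)*w^(j+k+2)) := by ring
    have hC2 : (2*(4:ℝ)^(j+k) + 2) ≤ 4^(j+k+4) := by
      have h1 : (1:ℝ) ≤ 4^(j+k) := by
        simpa using pow_le_pow_left₀ (by norm_num : (0:ℝ) ≤ 1) (by norm_num : (1:ℝ) ≤ 4) (j+k)
      have e4 : (4:ℝ)^(j+k+4) = 4^(j+k) * 256 := by
        rw [pow_add]; norm_num
      rw [e4]; linarith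
    calc |u^j*(s+b)^k - v^j*b^k| * (v*b)
        ≤ (u^j * |s+b|^k + v^j*b^k) * (v*b) :=
          mul_le_mul_of_nonneg_right hAabs (by positivity)
      _ = u^j* |s+b|^k*(v*b) + v^j*b^k*(v*b) := by ring
      _ ≤ (2*4^(j+k)) * (v^j*b^k*(v+b)*w^(j+k+2))
            + 2*(v^j*b^k*(v+b)*w^(j+k+2)) := add_le_add hP1 hP2
      _ = (2*(4:ℝ)^(j+k) + 2) * (v^j*b^k*(v+b)*w^(j+k+2)) := by ring
      _ ≤ 4^(j+k+4) * (v^j*b^k*(v+b)*w^(j+k+2)) :=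
          mul_le_mul_of_nonneg_right hC2 (by positivity)
      _ = 4^(j+k+4)*v^j*b^k*(v+b)*w^(j+k+2) := by ring
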